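/- The map (x₁,x₂) ↦ (x₂, -x₁²) on ℝ² has an isolated zero at the origin whose index (Brouwer degree of the normalized map on a small circle) equals 0. -/

import Mathlib

/-- the map (x₁,x₂) ↦ (x₂, -x₁²) has an isolated zero at the origin
whose index is 0: on every small circle the normalized map into the unit circle is
null-homotopic. -/
theorem stmt17 (w : ℝ × ℝ → ℝ × ℝ) (hw : w = fun x => (x.2, -(x.1 ^ 2))) :
    (∀ x : ℝ × ℝ, w x = 0 → x = 0) ∧
    ∀ r : ℝ, 0 < r →
      ∀ g : C(Metric.sphere (0 : ℝ × ℝ) r, Metric.sphere (0 : ℝ × ℝ) 1),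
        (∀ p : Metric.sphere (0 : ℝ × ℝ) r,
          (g p : ℝ × ℝ) = ‖w (p : ℝ × ℝ)‖⁻¹ • w (p : ℝ × ℝ)) →
        ∃ y : Metric.sphere (0 : ℝ × ℝ) 1,
          ContinuousMap.Homotopic g (ContinuousMap.const _ y) := by
  subst hw
  constructor
  · intro x hx
    have h1 : x.2 = 0 := congrArg Prod.fst hx
    have h2 : -(x.1 ^ 2) = 0 := congrArg Prod.snd hx
    have : x.1 = 0 := by nlinarith [sq_nonneg x.1]
    exact Prod.ext this h1
  · intro r hr g hg
    have hy : ((0 : ℝ), (-1 : ℝ)) ∈ Metric.sphere (0 : ℝ × ℝ) 1 := by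
      simp [mem_sphere_iff_norm, Prod.norm_def]
    refine ⟨⟨((0 : ℝ), (-1 : ℝ)), hy⟩, ?_⟩
    -- second coordinate of g is always ≤ 0
    have hg2 : ∀ p : Metric.sphere (0 : ℝ × ℝ) r, ((g p : ℝ × ℝ)).2 ≤ 0 := by
      intro p
      rw [hg p]
      have : ((‖((p : ℝ × ℝ).2, -((p : ℝ × ℝ).1 ^ 2))‖⁻¹ : ℝ) •
          (((p : ℝ × ℝ).2, -((p : ℝ × ℝ).1 ^ 2)) : ℝ × ℝ)).2
          = ‖((p : ℝ × ℝ).2, -((p : ℝ × ℝ).1 ^ 2))‖⁻¹ * (-((p : ℝ × ℝ).1 ^ 2)) := rfl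
      rw [this]
      apply mul_nonpos_of_nonneg_of_nonpos
      · positivity
      · nlinarith [sq_nonneg (p : ℝ × ℝ).1]
    -- the straight-line vector field
    set v : unitInterval × Metric.sphere (0 : ℝ × ℝ) r → ℝ × ℝ :=
      fun q => (1 - (q.1 : ℝ)) • (g q.2 : ℝ × ℝ) + (q.1 : ℝ) • (((0 : ℝ), (-1 : ℝ)) : ℝ × ℝ)
      with hv_def
    have hgnorm : ∀ p, ‖(g p : ℝ × ℝ)‖ = 1 := by
      intro p
      have := (g p).2
      rwa [mem_sphere_iff_norm, sub_zero] at this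
    have hvne : ∀ q, v q ≠ 0 := by
      rintro ⟨t, p⟩ hq
      rcases eq_or_lt_of_le t.2.1 with h0 | h0
      · have : v (t, p) = (g p : ℝ × ℝ) := by
          simp [hv_def, ← h0]
        rw [this] at hq
        have := hgnorm p
        rw [hq] at this
        simp at this
      · have hsnd : (v (t, p)).2 = (1 - (t : ℝ)) * ((g p : ℝ × ℝ)).2 + (t : ℝ) * (-1) := rfl
        have h1 : (1 - (t : ℝ)) * ((g p : ℝ × ℝ)).2 ≤ 0 :=
          mul_nonpos_of_nonneg_of_nonpos (by linarith [t.2.2]) (hg2 p)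
        have : (v (t, p)).2 < 0 := by rw [hsnd]; nlinarith
        rw [hq] at this
        simp at this
    have hvcont : Continuous v := by
      apply Continuous.add
      · exact (continuous_const.sub (show Continuous (fun q : unitInterval × Metric.sphere (0 : ℝ × ℝ) r => (q.1 : ℝ)) from continuous_subtype_val.comp continuous_fst)).smul
          ((map_continuous g).subtype_val.comp continuous_snd)
      · exact ((show Continuous (fun q : unitInterval × Metric.sphere (0 : ℝ × ℝ) r => (q.1 : ℝ)) from continuous_subtype_val.comp continuous_fst)).smul continuous_const
    have hmem : ∀ q, ‖v q‖⁻¹ • v q ∈ Metric.sphere (0 : ℝ × ℝ) 1 := by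
      intro q
      rw [mem_sphere_iff_norm, sub_zero, norm_smul, norm_inv, norm_norm,
        inv_mul_cancel₀ (norm_ne_zero_iff.mpr (hvne q))]
    refine ⟨{
      toFun := fun q => ⟨‖v q‖⁻¹ • v q, hmem q⟩
      continuous_toFun := ?_
      map_zero_left := ?_
      map_one_left := ?_ }⟩
    · exact Continuous.subtype_mk
        (((hvcont.norm).inv₀ (fun q => norm_ne_zero_iff.mpr (hvne q))).smul hvcont) _
    · intro p
      apply Subtype.ext
      have hv0 : v (0, p) = (g p : ℝ × ℝ) := by simp [hv_def]
      simp only [hv0, hgnorm p, inv_one, one_smul]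
    · intro p
      apply Subtype.ext
      have hv1 : v (1, p) = (((0 : ℝ), (-1 : ℝ)) : ℝ × ℝ) := by simp [hv_def]
      have hn : ‖(((0 : ℝ), (-1 : ℝ)) : ℝ × ℝ)‖ = 1 := by simp [Prod.norm_def]
      simp only [hv1, hn, inv_one, one_smul]
      rfl
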